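/- arXiv:math/0211157 — 3 statements merged into one kernel-verified Lean document; each statement's English description precedes it below -/
import Mathlib

section
/- Let F_n be a free group of rank n ≥ 2 and let k be a positive integer such that Aut(F_n) contains an element of order k. Then there exist φ ∈ Aut(F_n) and u ∈ F_n such that the orbit Orb_φ(u) = {φ^m(u) : m ≥ 0} has cardinality exactly k. -/
namespace FreeGroupUR

open FreeGroup List

variable {α : Type*} [DecidableEq α]

/-- Non-cancelling adjacency of letters. -/
def R (a b : α × Bool) : Prop := b ≠ (a.1, !a.2)

/-- A word is reduced iff adjacent letters never cancel. -/
abbrev Rw (L : List (α × Bool)) : Prop := L.Chain' R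

/-- Cyclically-reduced boundary condition. -/
def CRb (w : List (α × Bool)) : Prop := ∀ a ∈ w.getLast?, ∀ b ∈ w.head?, R a b

lemma rw_append {L1 L2 : List (α × Bool)} :
    Rw (L1 ++ L2) ↔ Rw L1 ∧ Rw L2 ∧ ∀ x ∈ L1.getLast?, ∀ y ∈ L2.head?, R x y :=
  List.isChain_append

lemma reduce_eq_self_of_rw : ∀ {L : List (α × Bool)}, Rw L → FreeGroup.reduce L = L
  | [], _ => rfl
  | [_], _ => rfl
  | x :: y :: t, h => by
    obtain ⟨hxy, ht⟩ := List.isChain_cons_cons.mp h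
    have ih := reduce_eq_self_of_rw ht
    rw [FreeGroup.reduce.cons, ih]
    dsimp only
    rw [if_neg]
    rintro ⟨h1, h2⟩
    exact hxy (by obtain ⟨ya, yb⟩ := y; obtain ⟨xa, xb⟩ := x; simp_all)

lemma exists_not_chain' {β : Type*} {S : β → β → Prop} :
    ∀ {M : List β}, ¬ M.Chain' S → ∃ l1 a b l2, M = l1 ++ a :: b :: l2 ∧ ¬ S a b
  | [], h => absurd List.isChain_nil h
  | [x], h => absurd (List.isChain_singleton x) h
  | a :: b :: t, h => by
    rw [List.Chain', List.isChain_cons_cons] at h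
    by_cases hS : S a b
    · have h2 : ¬ (b :: t).Chain' S := fun hh => h ⟨hS, hh⟩
      obtain ⟨l1, c, d, l2, heq, hnS⟩ := exists_not_chain' h2
      exact ⟨a :: l1, c, d, l2, by rw [List.cons_append, heq], hnS⟩
    · exact ⟨[], a, b, t, rfl, hS⟩

lemma rw_reduce (L : List (α × Bool)) : Rw (FreeGroup.reduce L) := by
  by_contra h
  obtain ⟨l1, a, b, l2, heq, hnS⟩ := exists_not_chain' h
  rw [R, not_not] at hnS
  subst hnS
  obtain ⟨xa, xb⟩ := a
  exact FreeGroup.reduce.not heq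

lemma rw_toWord (x : FreeGroup α) : Rw x.toWord := by
  rw [← FreeGroup.reduce_toWord]; exact rw_reduce _

lemma toWord_mk_rw {L : List (α × Bool)} (h : Rw L) : (FreeGroup.mk L).toWord = L := by
  rw [FreeGroup.toWord_mk, reduce_eq_self_of_rw h]

lemma invRev_append' (L1 L2 : List (α × Bool)) :
    invRev (L1 ++ L2) = invRev L2 ++ invRev L1 := by simp [invRev]

lemma invRev_cons' (x : α × Bool) (L : List (α × Bool)) :
    invRev (x :: L) = invRev L ++ [(x.1, !x.2)] := by simp [invRev]

lemma invRev_nil' : invRev ([] : List (α × Bool)) = [] := rfl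

lemma head?_invRev (L : List (α × Bool)) :
    (invRev L).head? = L.getLast?.map (fun a => (a.1, !a.2)) := by
  rw [invRev, List.head?_reverse, List.getLast?_map]

lemma getLast?_invRev (L : List (α × Bool)) :
    (invRev L).getLast? = L.head?.map (fun a => (a.1, !a.2)) := by
  rw [invRev, List.getLast?_reverse, List.head?_map]

lemma flatten_replicate_nil (c : ℕ) :
    (List.replicate c ([] : List (α × Bool))).flatten = [] := by
  induction c with
  | zero => rfl
  | succ c ih => rw [List.replicate_succ, List.flatten_cons, ih]; rfl

lemma flatten_replicate_succ' (c : ℕ) (w : List (α × Bool)) :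
    (List.replicate (c + 1) w).flatten = (List.replicate c w).flatten ++ w := by
  rw [List.replicate_succ', List.flatten_append]
  simp

lemma length_flatten_replicate (c : ℕ) (w : List (α × Bool)) :
    ((List.replicate c w).flatten).length = c * w.length := by
  induction c with
  | zero => simp
  | succ c ih => rw [List.replicate_succ, List.flatten_cons, List.length_append, ih]; ring

lemma head?_flatten_replicate {w : List (α × Bool)} (hw : w ≠ []) {c : ℕ} (hc : 0 < c) :
    ((List.replicate c w).flatten).head? = w.head? := by
  obtain ⟨c', rfl⟩ : ∃ c', c = c' + 1 := ⟨c - 1, (Nat.succ_pred_eq_of_pos hc).symm⟩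
  rw [List.replicate_succ, List.flatten_cons]
  obtain ⟨x, t, rfl⟩ := List.exists_cons_of_ne_nil hw
  rfl

lemma getLast?_flatten_replicate {w : List (α × Bool)} (hw : w ≠ []) {c : ℕ} (hc : 0 < c) :
    ((List.replicate c w).flatten).getLast? = w.getLast? := by
  obtain ⟨c', rfl⟩ : ∃ c', c = c' + 1 := ⟨c - 1, (Nat.succ_pred_eq_of_pos hc).symm⟩
  rw [flatten_replicate_succ', List.getLast?_append_of_ne_nil _ hw]

lemma rw_flatten_replicate {w : List (α × Bool)} (hrw : Rw w) (hcr : CRb w) (c : ℕ) :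
    Rw ((List.replicate c w).flatten) := by
  induction c with
  | zero => exact List.isChain_nil
  | succ c ih =>
    rw [List.replicate_succ, List.flatten_cons, rw_append]
    refine ⟨hrw, ih, ?_⟩
    intro x hx y hy
    rcases Nat.eq_zero_or_pos c with rfl | hc
    · simp at hy
    · rw [head?_flatten_replicate ?hne hc] at hy
      · exact hcr x hx y hy
      · rintro rfl; simp at hx

lemma p_nil_of_rw_nil {p : List (α × Bool)} (h : Rw (p ++ [] ++ invRev p)) : p = [] := by
  by_contra hp
  rw [List.append_nil, rw_append] at h
  obtain ⟨-, -, hb⟩ := h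
  obtain ⟨a, ha⟩ := List.getLast?_isSome.mpr hp |> Option.isSome_iff_exists.mp
  have hhead : (invRev p).head? = some (a.1, !a.2) := by
    rw [head?_invRev, ha]; rfl
  exact hb a ha _ hhead rfl

lemma rw_pow_decomp {p w : List (α × Bool)} (h : Rw (p ++ w ++ invRev p)) (hcr : CRb w)
    {c : ℕ} (hc : 0 < c) :
    Rw (p ++ (List.replicate c w).flatten ++ invRev p) := by
  rcases eq_or_ne w [] with rfl | hw
  · have := p_nil_of_rw_nil h
    subst this
    rw [flatten_replicate_nil]
    exact List.isChain_nil
  · rw [rw_append] at h ⊢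
    obtain ⟨h1, h2, h3⟩ := h
    rw [rw_append] at h1
    obtain ⟨h1p, h1w, h1b⟩ := h1
    refine ⟨?_, h2, ?_⟩
    · rw [rw_append]
      refine ⟨h1p, rw_flatten_replicate h1w hcr c, ?_⟩
      intro x hx y hy
      rw [head?_flatten_replicate hw hc] at hy
      exact h1b x hx y hy
    · intro x hx y hy
      rw [List.getLast?_append_of_ne_nil, getLast?_flatten_replicate hw hc] at hx
      · refine h3 x ?_ y hy
        rw [List.getLast?_append_of_ne_nil _ hw]
        exact hx
      · intro hn
        rw [hn] at hx
        have : ((List.replicate c w).flatten).length = 0 := by rw [hn]; rfl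
        rw [length_flatten_replicate] at this
        rcases Nat.mul_eq_zero.mp this with h' | h'
        · omega
        · exact hw (List.length_eq_zero_iff.mp h')

lemma toWord_pow_decomp {p w : List (α × Bool)} (h : Rw (p ++ w ++ invRev p)) (hcr : CRb w)
    {c : ℕ} (hc : 0 < c) :
    ((FreeGroup.mk (p ++ w ++ invRev p)) ^ c).toWord
      = p ++ (List.replicate c w).flatten ++ invRev p := by
  have hsplit : FreeGroup.mk (p ++ w ++ invRev p)
      = FreeGroup.mk p * FreeGroup.mk w * (FreeGroup.mk p)⁻¹ := by
    rw [FreeGroup.inv_mk, FreeGroup.mul_mk, FreeGroup.mul_mk]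
  rw [hsplit, conj_pow, FreeGroup.pow_mk, FreeGroup.mul_mk, FreeGroup.inv_mk, FreeGroup.mul_mk]
  exact toWord_mk_rw (rw_pow_decomp h hcr hc)

lemma exists_decomp : ∀ (L : List (α × Bool)), Rw L →
    ∃ p w, L = p ++ w ++ invRev p ∧ CRb w := by
  intro L
  generalize hn : L.length = N
  induction N using Nat.strong_induction_on generalizing L with
  | _ N ih =>
  intro hL
  by_cases hcr : CRb L
  · exact ⟨[], L, by simp [invRev_nil'], hcr⟩
  · rw [CRb] at hcr
    push_neg at hcr
    obtain ⟨a, ha, b, hb, hab⟩ := hcr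
    rw [R, not_not] at hab
    have hLne : L ≠ [] := by rintro rfl; simp at hb
    obtain ⟨x, t, rfl⟩ := List.exists_cons_of_ne_nil hLne
    have hbx : b = x := by
      have h' : x = b := by simpa using hb
      exact h'.symm
    rcases eq_or_ne t [] with rfl | ht
    · exfalso
      have hax : a = x := by
        have h' : x = a := by simpa using ha
        exact h'.symm
      rw [hbx, hax] at hab
      have h2 := congrArg Prod.snd hab
      simp at h2
    · have htd : t.dropLast ++ [t.getLast ht] = t := List.dropLast_append_getLast ht
      have h5 : (x :: t).getLast? = some (t.getLast ht) := by
        rw [List.getLast?_eq_getLast (List.cons_ne_nil x t), List.getLast_cons ht]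
      have haz : a = t.getLast ht := by
        rw [Option.mem_def, h5] at ha
        exact (Option.some_inj.mp ha).symm
      have hM : Rw t.dropLast := by
        have h1 : Rw t := (List.isChain_cons.mp hL).2
        rw [← htd, rw_append] at h1
        exact h1.1
      have hlen : t.dropLast.length < N := by
        have h6 := congrArg List.length htd
        simp only [List.length_append, List.length_singleton] at h6
        simp only [List.length_cons] at hn
        omega
      obtain ⟨p', w, hdec, hcw⟩ := ih _ hlen t.dropLast rfl hM
      refine ⟨x :: p', w, ?_, hcw⟩
      have hz : t.getLast ht = (x.1, !x.2) := by
        rw [← haz, ← hbx, hab]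
        simp
      rw [invRev_cons']
      conv_lhs => rw [← htd]
      rw [hdec, hz]
      simp [List.append_assoc]

lemma toWord_eq_nil_of_pow_eq_one {y : FreeGroup α} {c : ℕ} (hc : 0 < c)
    {q v : List (α × Bool)} (hy : y.toWord = q ++ v ++ invRev q) (hcv : CRb v)
    (h : y ^ c = 1) : y = 1 := by
  have hrw : Rw (q ++ v ++ invRev q) := hy ▸ rw_toWord y
  have hyq : y = FreeGroup.mk (q ++ v ++ invRev q) := by rw [← hy, FreeGroup.mk_toWord]
  have := toWord_pow_decomp hrw hcv hc
  rw [← hyq, h, FreeGroup.toWord_one] at this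
  have h1 : q = [] ∧ (List.replicate c v).flatten ++ invRev q = [] := by
    rw [List.append_assoc] at this
    exact List.append_eq_nil_iff.mp this.symm
  have h2 := List.append_eq_nil_iff.mp h1.2
  have hv : v = [] := by
    have := congrArg List.length h2.1
    rw [length_flatten_replicate] at this
    simp at this
    rcases this with h' | h'
    · omega
    · exact h'
  rw [hyq, h1.1, hv, invRev_nil']
  rfl

lemma pow_eq_pow_aux {x y : FreeGroup α} {c : ℕ} (hc : 0 < c) (h : x ^ c = y ^ c)
    {p w q v : List (α × Bool)}
    (hx : x.toWord = p ++ w ++ invRev p) (hcw : CRb w)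
    (hy : y.toWord = q ++ v ++ invRev q) (hcv : CRb v)
    (hw : w ≠ []) (hv : v ≠ []) (hpq : p.length ≤ q.length) : x = y := by
  have hrwx : Rw (p ++ w ++ invRev p) := hx ▸ rw_toWord x
  have hrwy : Rw (q ++ v ++ invRev q) := hy ▸ rw_toWord y
  have hxm : x = FreeGroup.mk (p ++ w ++ invRev p) := by rw [← hx, FreeGroup.mk_toWord]
  have hym : y = FreeGroup.mk (q ++ v ++ invRev q) := by rw [← hy, FreeGroup.mk_toWord]
  set Jw := (List.replicate c w).flatten with hJw
  set Jv := (List.replicate c v).flatten with hJv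
  have E : p ++ Jw ++ invRev p = q ++ Jv ++ invRev q := by
    rw [← toWord_pow_decomp hrwx hcw hc, ← toWord_pow_decomp hrwy hcv hc, ← hxm, ← hym, h]
  -- p is a prefix of q
  have hp_take : p = q.take p.length := by
    have h1 : (p ++ (Jw ++ invRev p)).take p.length = p := List.take_left
    have h2 : (q ++ (Jv ++ invRev q)).take p.length = q.take p.length :=
      List.take_append_of_le_length hpq
    have E' : p ++ (Jw ++ invRev p) = q ++ (Jv ++ invRev q) := by
      rw [← List.append_assoc, ← List.append_assoc]; exact E
    calc p = (p ++ (Jw ++ invRev p)).take p.length := h1.symm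
      _ = (q ++ (Jv ++ invRev q)).take p.length := by rw [E']
      _ = q.take p.length := h2
  have hpre : p <+: q := hp_take ▸ List.take_prefix p.length q
  obtain ⟨r, hq⟩ := hpre
  have E2 : Jw = r ++ (Jv ++ invRev r) := by
    have e : p ++ (Jw ++ invRev p) = p ++ ((r ++ (Jv ++ invRev r)) ++ invRev p) := by
      calc p ++ (Jw ++ invRev p) = (p ++ Jw) ++ invRev p := by rw [List.append_assoc]
        _ = (q ++ Jv) ++ invRev q := E
        _ = ((p ++ r) ++ Jv) ++ (invRev r ++ invRev p) := by rw [← hq, invRev_append']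
        _ = p ++ ((r ++ (Jv ++ invRev r)) ++ invRev p) := by simp [List.append_assoc]
    exact List.append_cancel_right (List.append_cancel_left e)
  rcases eq_or_ne r [] with rfl | hrne
  · -- r = [] : conclude x = y
    rw [invRev_nil', List.nil_append, List.append_nil] at E2
    have hlen : w.length = v.length := by
      have := congrArg List.length E2
      rw [hJw, hJv, length_flatten_replicate, length_flatten_replicate] at this
      exact Nat.eq_of_mul_eq_mul_left hc this
    have hwv : w = v := by
      obtain ⟨c', rfl⟩ : ∃ c', c = c' + 1 := ⟨c - 1, (Nat.succ_pred_eq_of_pos hc).symm⟩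
      have h1 : Jw.take w.length = w := by
        rw [hJw, List.replicate_succ, List.flatten_cons, List.take_left]
      have h2 : Jv.take v.length = v := by
        rw [hJv, List.replicate_succ, List.flatten_cons, List.take_left]
      rw [← h1, ← h2, E2, hlen]
    rw [hxm, hym, ← hq, List.append_nil, hwv]
  · -- r ≠ [] : contradiction with cyclic reducedness of w
    exfalso
    obtain ⟨r0, r', rfl⟩ := List.exists_cons_of_ne_nil hrne
    have hhead : Jw.head? = some r0 := by rw [E2]; rfl
    have hhead2 : Jw.head? = w.head? := head?_flatten_replicate hw hc
    have hlast : Jw.getLast? = some (r0.1, !r0.2) := by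
      rw [E2, List.getLast?_append_of_ne_nil, List.getLast?_append_of_ne_nil, getLast?_invRev]
      · rfl
      · rw [invRev]; simp
      · intro hn
        rw [List.append_eq_nil_iff] at hn
        rw [invRev] at hn
        simp at hn
    have hlast2 : Jw.getLast? = w.getLast? := getLast?_flatten_replicate hw hc
    have hw_head : w.head? = some r0 := by rw [← hhead2, hhead]
    have hw_last : w.getLast? = some (r0.1, !r0.2) := by rw [← hlast2, hlast]
    have := hcw _ hw_last _ hw_head
    rw [R] at this
    exact this (by simp)

theorem eq_of_pow_eq {x y : FreeGroup α} {c : ℕ} (hc : 0 < c) (h : x ^ c = y ^ c) : x = y := by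
  obtain ⟨p, w, hx, hcw⟩ := exists_decomp x.toWord (rw_toWord x)
  obtain ⟨q, v, hy, hcv⟩ := exists_decomp y.toWord (rw_toWord y)
  rcases eq_or_ne w [] with rfl | hw
  · have hp : p = [] := p_nil_of_rw_nil (hx ▸ rw_toWord x)
    have hx1 : x = 1 := by
      rw [← FreeGroup.toWord_eq_nil_iff, hx, hp, invRev_nil']; rfl
    rw [hx1, one_pow] at h
    rw [hx1]
    exact (toWord_eq_nil_of_pow_eq_one hc hy hcv h.symm).symm
  rcases eq_or_ne v [] with rfl | hv
  · have hq : q = [] := p_nil_of_rw_nil (hy ▸ rw_toWord y)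
    have hy1 : y = 1 := by
      rw [← FreeGroup.toWord_eq_nil_iff, hy, hq, invRev_nil']; rfl
    rw [hy1, one_pow] at h
    have := toWord_eq_nil_of_pow_eq_one hc hx hcw h
    rw [this, hy1]
  rcases le_total p.length q.length with hle | hle
  · exact pow_eq_pow_aux hc h hx hcw hy hcv hw hv hle
  · exact (pow_eq_pow_aux hc h.symm hy hcv hx hcw hv hw hle).symm

/-! ### Group-theoretic part -/

open scoped Pointwise

/-- The subgroup of fixed points of an automorphism. -/
def fixSubgroup {G : Type*} [Group G] (ψ : MulAut G) : Subgroup G where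
  carrier := {x | ψ x = x}
  one_mem' := map_one ψ
  mul_mem' := by
    intro a b ha hb
    simp only [Set.mem_setOf_eq] at *
    have hm : ψ (a * b) = ψ a * ψ b := map_mul ψ a b
    rw [hm, ha, hb]
  inv_mem' := by
    intro a ha
    simp only [Set.mem_setOf_eq] at *
    have hm : ψ a⁻¹ = (ψ a)⁻¹ := MulEquiv.map_inv ψ a
    rw [hm, ha]

lemma exists_pow_mem_of_finiteIndex {G : Type*} [Group G] (H : Subgroup G) [H.FiniteIndex]
    (g : G) : ∃ c, 0 < c ∧ g ^ c ∈ H := by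
  refine ⟨H.normalCore.index, ?_, ?_⟩
  · exact Nat.pos_of_ne_zero (Subgroup.FiniteIndex.index_ne_zero (H := H.normalCore))
  · exact H.normalCore_le (H.normalCore.pow_index_mem g)

lemma mulAut_eq_one_of_fix_finiteIndex {β : Type*} [DecidableEq β] (ψ : MulAut (FreeGroup β))
    (hfi : (fixSubgroup ψ).FiniteIndex) : ψ = 1 := by
  ext g
  obtain ⟨c, hc, hmem⟩ := exists_pow_mem_of_finiteIndex (fixSubgroup ψ) g
  have hpow : ψ (g ^ c) = g ^ c := hmem
  rw [map_pow] at hpow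
  exact eq_of_pow_eq hc hpow

lemma exists_full_period {β : Type*} [DecidableEq β] (φ : MulAut (FreeGroup β)) {k : ℕ}
    (hφ : orderOf φ = k) (hk : 0 < k) :
    ∃ u : FreeGroup β, ∀ m, 0 < m → m < k → (φ ^ m) u ≠ u := by
  by_contra hcon
  push_neg at hcon
  have hcov : ⋃ m ∈ Finset.Ioo 0 k,
      (1 : FreeGroup β) • ((fixSubgroup (φ ^ m) : Subgroup (FreeGroup β)) : Set (FreeGroup β))
        = Set.univ := by
    ext u
    simp only [Set.mem_iUnion, Set.mem_univ, iff_true, one_smul, Finset.mem_Ioo]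
    obtain ⟨m, hm1, hm2, hm3⟩ := hcon u
    exact ⟨m, ⟨hm1, hm2⟩, hm3⟩
  obtain ⟨m, hm, hfi⟩ := Subgroup.exists_finiteIndex_of_leftCoset_cover hcov
  rw [Finset.mem_Ioo] at hm
  have h1 : (φ ^ m) = 1 := mulAut_eq_one_of_fix_finiteIndex _ hfi
  have h2 : orderOf φ ∣ m := orderOf_dvd_of_pow_eq_one h1
  rw [hφ] at h2
  have := Nat.le_of_dvd hm.1 h2
  omega

end FreeGroupUR

theorem orbit_of_cardinality_k_exists (n : ℕ) (hn : 2 ≤ n) (k : ℕ) (hk : 0 < k)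
    (h : ∃ φ : MulAut (FreeGroup (Fin n)), orderOf φ = k) :
    ∃ (φ : MulAut (FreeGroup (Fin n))) (u : FreeGroup (Fin n)),
      {v : FreeGroup (Fin n) | ∃ m : ℕ, (φ ^ m) u = v}.ncard = k := by
  obtain ⟨φ, hφ⟩ := h
  obtain ⟨u, hu⟩ := FreeGroupUR.exists_full_period φ hφ hk
  refine ⟨φ, u, ?_⟩
  have hset : {v : FreeGroup (Fin n) | ∃ m : ℕ, (φ ^ m) u = v}
      = (fun m : ℕ => (φ ^ m) u) '' Set.Iio k := by
    ext v
    constructor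
    · rintro ⟨m, rfl⟩
      refine ⟨m % k, ?_, ?_⟩
      · exact Nat.mod_lt _ hk
      · show (φ ^ (m % k)) u = (φ ^ m) u
        rw [← hφ, pow_mod_orderOf]
    · rintro ⟨m, _, rfl⟩
      exact ⟨m, rfl⟩
  rw [hset]
  have hinj : Set.InjOn (fun m : ℕ => (φ ^ m) u) (Set.Iio k) := by
    intro a ha b hb hab
    have hab' : (φ ^ a) u = (φ ^ b) u := hab
    simp only [Set.mem_Iio] at ha hb
    by_contra hne
    -- wlog a < b
    rcases Nat.lt_or_ge a b with hlt | hge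
    · have key : (φ ^ (k - b + a)) u = u := by
        have h1 : (φ ^ (k - b)) ((φ ^ b) u) = (φ ^ (k - b)) ((φ ^ a) u) := by rw [hab']
        have h2 : ∀ (s t : ℕ) (z : FreeGroup (Fin n)), (φ ^ s) ((φ ^ t) z) = (φ ^ (s + t)) z := by
          intro s t z
          rw [pow_add]
          rfl
        rw [h2, h2] at h1
        rw [← h1]
        have h3 : k - b + b = k := Nat.sub_add_cancel (le_of_lt hb)
        rw [h3, ← hφ, pow_orderOf_eq_one]
        rfl
      exact hu (k - b + a) (by omega) (by omega) key
    · have hlt : b < a := by omega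
      have key : (φ ^ (k - a + b)) u = u := by
        have h1 : (φ ^ (k - a)) ((φ ^ a) u) = (φ ^ (k - a)) ((φ ^ b) u) := by rw [hab']
        have h2 : ∀ (s t : ℕ) (z : FreeGroup (Fin n)), (φ ^ s) ((φ ^ t) z) = (φ ^ (s + t)) z := by
          intro s t z
          rw [pow_add]
          rfl
        rw [h2, h2] at h1
        rw [← h1]
        have h3 : k - a + a = k := Nat.sub_add_cancel (le_of_lt ha)
        rw [h3, ← hφ, pow_orderOf_eq_one]
        rfl
      exact hu (k - a + b) (by omega) (by omega) key
  rw [Set.ncard_image_of_injOn hinj]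
  rw [← Finset.coe_range, Set.ncard_coe_finset, Finset.card_range]
end

section
/- For positive integers k, l (not both zero), the number of matrices A ∈ SL_2(ℤ) with a_{11} ≥ 0 and a_{12} ≤ 0 fixing the row vector (k, l) under right multiplication is at most 2. -/
theorem sl2_fixing_positive_vector_count (k l : ℤ) (hk : 0 < k) (hl : 0 < l) :
    {A : Matrix.SpecialLinearGroup (Fin 2) ℤ |
      0 ≤ (A : Matrix (Fin 2) (Fin 2) ℤ) 0 0 ∧
      (A : Matrix (Fin 2) (Fin 2) ℤ) 0 1 ≤ 0 ∧
      Matrix.vecMul ![k, l] (A : Matrix (Fin 2) (Fin 2) ℤ) = ![k, l]}.ncard ≤ 2 := by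
  set X : Matrix.SpecialLinearGroup (Fin 2) ℤ :=
    ⟨!![0, -1; 1, 2], by simp [Matrix.det_fin_two_of]⟩ with hX
  have hsub : {A : Matrix.SpecialLinearGroup (Fin 2) ℤ |
      0 ≤ (A : Matrix (Fin 2) (Fin 2) ℤ) 0 0 ∧
      (A : Matrix (Fin 2) (Fin 2) ℤ) 0 1 ≤ 0 ∧
      Matrix.vecMul ![k, l] (A : Matrix (Fin 2) (Fin 2) ℤ) = ![k, l]} ⊆ {1, X} := by
    rintro A ⟨ha0, hb0, hv⟩
    set a := (A : Matrix (Fin 2) (Fin 2) ℤ) 0 0 with ha'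
    set b := (A : Matrix (Fin 2) (Fin 2) ℤ) 0 1 with hb'
    set c := (A : Matrix (Fin 2) (Fin 2) ℤ) 1 0 with hc'
    set d := (A : Matrix (Fin 2) (Fin 2) ℤ) 1 1 with hd'
    have h0 := congrFun hv 0
    have h1 := congrFun hv 1
    simp [Matrix.vecMul, dotProduct, Fin.sum_univ_two, ← ha', ← hb', ← hc', ← hd'] at h0 h1
    have hdet : a * d - b * c = 1 := by
      have := A.2
      rw [Matrix.det_fin_two] at this
      exact this
    -- trace = 2
    have hkl : k * l ≠ 0 := by positivity
    have hbc : b * c = (1 - a) * (1 - d) := by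
      have hmul : (k * l) * (b * c) = (k * l) * ((1 - a) * (1 - d)) := by
        have e1 : l * c = k - k * a := by linarith
        have e2 : k * b = l - l * d := by linarith
        linear_combination (k * b) * e1 + (k - k * a) * e2
      exact mul_left_cancel₀ hkl hmul
    have htr : a + d = 2 := by nlinarith [hdet, hbc]
    -- a ≤ 1
    have hkb : k * b = l * (a - 1) := by linear_combination h1 - l * htr
    have ha1 : a ≤ 1 := by nlinarith [mul_nonpos_of_nonneg_of_nonpos hk.le hb0]
    have hcase : a = 0 ∨ a = 1 := by omega
    rcases hcase with h | h
    · -- A = X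
      right
      have hd2 : d = 2 := by omega
      have hbc' : b * c = -1 := by rw [hbc, h, hd2]; ring
      have hlc : l * c = k := by linear_combination h0 - k * h
      have hcpos : 0 < c := by nlinarith [hlc]
      have hbu : IsUnit b := IsUnit.of_mul_eq_one (a := b) (-c) (by linear_combination -hbc')
      have hb1 : b = -1 := by
        rcases Int.isUnit_iff.mp hbu with h' | h' <;> omega
      have hc1 : c = 1 := by linear_combination c * hb1 - hbc'
      ext i j
      fin_cases i <;> fin_cases j <;>
        simp [hX, ← ha', ← hb', ← hc', ← hd', h, hb1, hc1, hd2]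
    · -- A = 1
      left
      have hd1 : d = 1 := by omega
      have hb1 : b = 0 := by
        have : k * b = 0 := by rw [hkb, h]; ring
        exact (mul_eq_zero.mp this).resolve_left (by positivity)
      have hc1 : c = 0 := by
        have : l * c = 0 := by linear_combination h0 - k * h
        exact (mul_eq_zero.mp this).resolve_left (by positivity)
      ext i j
      fin_cases i <;> fin_cases j <;>
        simp [← ha', ← hb', ← hc', ← hd', h, hb1, hc1, hd1]
  calc ({A : Matrix.SpecialLinearGroup (Fin 2) ℤ |
      0 ≤ (A : Matrix (Fin 2) (Fin 2) ℤ) 0 0 ∧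
      (A : Matrix (Fin 2) (Fin 2) ℤ) 0 1 ≤ 0 ∧
      Matrix.vecMul ![k, l] (A : Matrix (Fin 2) (Fin 2) ℤ) = ![k, l]}).ncard
      ≤ ({1, X} : Set (Matrix.SpecialLinearGroup (Fin 2) ℤ)).ncard :=
        Set.ncard_le_ncard hsub (Set.toFinite _)
    _ ≤ 2 := by
        apply le_trans (Set.ncard_insert_le _ _)
        simp
end

section
/- For odd m ≥ 1, the number of primitive elements of length m in the free group F_2 is greater than (8/(3√3))·(√3)^m. -/
def IsPrimitive (u : FreeGroup (Fin 2)) : Prop :=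
  ∃ φ : FreeGroup (Fin 2) ≃* FreeGroup (Fin 2), φ (FreeGroup.of 0) = u

/- ### Auxiliary material -/

open FreeGroup

abbrev Ltr := Fin 2 × Bool

/-- The no-cancellation relation between adjacent letters. -/
def R (x y : Ltr) : Prop := ¬(x.1 = y.1 ∧ x.2 = !y.2)

instance (x y : Ltr) : Decidable (R x y) := by unfold R; infer_instance

lemma reduce_eq_self {L : List (Fin 2 × Bool)}
    (h : List.Chain' (fun x y : Fin 2 × Bool => ¬(x.1 = y.1 ∧ x.2 = !y.2)) L) :
    FreeGroup.reduce L = L := by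
  induction L with
  | nil => rfl
  | cons x t ih =>
    rw [FreeGroup.reduce.cons, ih h.tail]
    cases t with
    | nil => rfl
    | cons y t' =>
      show (if x.1 = y.1 ∧ x.2 = !y.2 then t' else x :: y :: t') = x :: y :: t'
      rw [if_neg (List.isChain_cons_cons.mp h).1]

lemma R_flip : ∀ a b : Ltr, R a b → R (b.1, !b.2) (a.1, !a.2) := by decide

lemma chain_invRev {v : List Ltr} (h : List.Chain' R v) :
    List.Chain' R (FreeGroup.invRev v) := by
  unfold FreeGroup.invRev
  show List.IsChain R _
  rw [List.isChain_reverse, List.isChain_map]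
  exact (h : List.IsChain R v).imp fun {a b} hab => R_flip a b hab

lemma getLast?_invRev (v : List Ltr) :
    (FreeGroup.invRev v).getLast? = v.head?.map (fun g => (g.1, !g.2)) := by
  unfold FreeGroup.invRev
  rw [List.getLast?_reverse, List.head?_map]

lemma head?_invRev (v : List Ltr) :
    (FreeGroup.invRev v).head? = v.getLast?.map (fun g => (g.1, !g.2)) := by
  unfold FreeGroup.invRev
  rw [List.head?_reverse, List.getLast?_map]

lemma head?_append_of_ne_nil {A B : List Ltr} (h : A ≠ []) :
    (A ++ B).head? = A.head? := by
  cases A with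
  | nil => exact absurd rfl h
  | cons a t => rfl

/-- A successor-letter choice function: `s ℓ i` never cancels with `ℓ`. -/
def s : Ltr → Fin 3 → Ltr
  | (a, b), 0 => (a, b)
  | (a, _), 1 => (a + 1, true)
  | (a, _), 2 => (a + 1, false)

lemma s_ne : ∀ (ℓ : Ltr) (i : Fin 3), R ℓ (s ℓ i) := by decide

lemma s_inj : ∀ (ℓ : Ltr) (i j : Fin 3), s ℓ i = s ℓ j → i = j := by decide

/-- Build a reduced word starting with `ℓ`, extending by choices in `t`. -/
def extw : Ltr → List (Fin 3) → List Ltr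
  | ℓ, [] => [ℓ]
  | ℓ, i :: t => ℓ :: extw (s ℓ i) t

lemma extw_head? (ℓ : Ltr) (t : List (Fin 3)) : (extw ℓ t).head? = some ℓ := by
  cases t <;> rfl

lemma extw_ne_nil (ℓ : Ltr) (t : List (Fin 3)) : extw ℓ t ≠ [] := by
  cases t <;> simp [extw]

lemma extw_length (ℓ : Ltr) (t : List (Fin 3)) : (extw ℓ t).length = t.length + 1 := by
  induction t generalizing ℓ with
  | nil => rfl
  | cons i t ih => simp [extw, ih]

lemma extw_chain (ℓ : Ltr) (t : List (Fin 3)) : List.Chain' R (extw ℓ t) := by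
  induction t generalizing ℓ with
  | nil => simp [extw, List.Chain']
  | cons i t ih =>
    rw [extw]; show List.IsChain R _; rw [List.isChain_cons]
    refine ⟨?_, ih _⟩
    intro y hy
    rw [extw_head? _ t] at hy
    cases hy
    exact s_ne ℓ i

lemma extw_inj : ∀ (t t' : List (Fin 3)) (ℓ ℓ' : Ltr),
    extw ℓ t = extw ℓ' t' → ℓ = ℓ' ∧ t = t'
  | [], [], ℓ, ℓ', h => by simp [extw] at h; exact ⟨h, rfl⟩
  | [], i' :: t', ℓ, ℓ', h => by
      simp only [extw, List.cons.injEq] at h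
      exact absurd h.2.symm (extw_ne_nil _ _)
  | i :: t, [], ℓ, ℓ', h => by
      simp only [extw, List.cons.injEq] at h
      exact absurd h.2 (extw_ne_nil _ _)
  | i :: t, i' :: t', ℓ, ℓ', h => by
      simp only [extw, List.cons.injEq] at h
      obtain ⟨rfl, h2⟩ := h
      have hh : s ℓ i = s ℓ i' := by
        have := congrArg List.head? h2
        rw [extw_head?, extw_head?] at this
        exact Option.some.inj this
      obtain ⟨-, rfl⟩ := extw_inj t t' _ _ (hh ▸ h2)
      exact ⟨rfl, by rw [s_inj ℓ i i' hh]⟩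

/- ### Primitivity lemmas -/

def mulEquivOfHoms (f g : FreeGroup (Fin 2) →* FreeGroup (Fin 2))
    (h1 : ∀ a, g (f (FreeGroup.of a)) = FreeGroup.of a)
    (h2 : ∀ a, f (g (FreeGroup.of a)) = FreeGroup.of a) :
    FreeGroup (Fin 2) ≃* FreeGroup (Fin 2) where
  toFun := f
  invFun := g
  left_inv x := DFunLike.congr_fun
    (FreeGroup.ext_hom (g.comp f) (MonoidHom.id _) (by simpa using h1)) x
  right_inv x := DFunLike.congr_fun
    (FreeGroup.ext_hom (f.comp g) (MonoidHom.id _) (by simpa using h2)) x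
  map_mul' := f.map_mul

lemma prim_conj (g : FreeGroup (Fin 2)) {u : FreeGroup (Fin 2)} (h : IsPrimitive u) :
    IsPrimitive (g * u * g⁻¹) := by
  obtain ⟨φ, hφ⟩ := h
  exact ⟨φ.trans (MulAut.conj g), by simp [hφ, MulAut.conj]⟩

lemma prim_inv {u : FreeGroup (Fin 2)} (h : IsPrimitive u) : IsPrimitive u⁻¹ := by
  obtain ⟨φ, hφ⟩ := h
  refine ⟨(mulEquivOfHoms (FreeGroup.lift fun x => (FreeGroup.of x)⁻¹)
      (FreeGroup.lift fun x => (FreeGroup.of x)⁻¹) (by simp) (by simp)).trans φ, ?_⟩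
  simp [mulEquivOfHoms, hφ]

lemma prim_of (j : Fin 2) : IsPrimitive (FreeGroup.of j) := by
  fin_cases j
  · exact ⟨MulEquiv.refl _, rfl⟩
  · exact ⟨FreeGroup.freeGroupCongr (Equiv.swap 0 1), by simp⟩

lemma prim_single (c : Ltr) : IsPrimitive (FreeGroup.mk [c]) := by
  obtain ⟨j, b⟩ := c
  cases b
  · have : FreeGroup.mk [(j, false)] = (FreeGroup.of j)⁻¹ := by
      rw [show FreeGroup.of j = FreeGroup.mk [(j, true)] from rfl, FreeGroup.inv_mk]
      rfl
    rw [this]; exact prim_inv (prim_of j)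
  · exact prim_of j

def phiE (K : ℕ) : FreeGroup (Fin 2) ≃* FreeGroup (Fin 2) :=
  mulEquivOfHoms
    (FreeGroup.lift fun x => if x = 0 then
        (FreeGroup.of 0) ^ K * FreeGroup.of 1 * (FreeGroup.of 0) ^ K else FreeGroup.of 0)
    (FreeGroup.lift fun x => if x = 0 then FreeGroup.of 1 else
        ((FreeGroup.of 1) ^ K)⁻¹ * FreeGroup.of 0 * ((FreeGroup.of 1) ^ K)⁻¹)
    (by intro a; fin_cases a <;> simp <;> group)
    (by intro a; fin_cases a <;> simp <;> group)

lemma prim_e (K : ℕ) :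
    IsPrimitive ((FreeGroup.of 0) ^ K * FreeGroup.of 1 * (FreeGroup.of 0) ^ K) :=
  ⟨phiE K, by simp [phiE, mulEquivOfHoms]⟩

/- ### The family of conjugates -/

def vw (n : ℕ) (c : Ltr) (β : Bool) (f : Fin n → Fin 3) : List Ltr :=
  extw (c.1 + 1, β) (List.ofFn f)

lemma vw_ne_nil (n c β f) : vw n c β f ≠ [] := extw_ne_nil _ _

lemma vw_length (n c β f) : (vw n c β f).length = n + 1 := by
  rw [vw, extw_length, List.length_ofFn]

lemma vw_head? (n c β f) : (vw n c β f).head? = some (c.1 + 1, β) := extw_head? _ _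

def Ww (n : ℕ) (c : Ltr) (β : Bool) (f : Fin n → Fin 3) : List Ltr :=
  FreeGroup.invRev (vw n c β f) ++ (c :: vw n c β f)

lemma RA : ∀ (c : Ltr) (β : Bool), R (c.1 + 1, !β) c := by decide
lemma RB : ∀ (c : Ltr) (β : Bool), R c (c.1 + 1, β) := by decide

lemma Ww_chain (n c β f) : List.Chain' R (Ww n c β f) := by
  rw [Ww]; show List.IsChain R _; rw [List.isChain_append]
  refine ⟨chain_invRev (extw_chain _ _), ?_, ?_⟩
  · rw [List.isChain_cons]
    refine ⟨?_, extw_chain _ _⟩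
    intro y hy
    rw [vw_head?] at hy
    cases hy
    exact RB c β
  · intro x hx y hy
    rw [getLast?_invRev, vw_head?] at hx
    cases hx
    cases hy
    exact RA c β

lemma Ww_toWord (n c β f) : (FreeGroup.mk (Ww n c β f)).toWord = Ww n c β f := by
  rw [FreeGroup.toWord_mk]
  exact reduce_eq_self (Ww_chain n c β f)

lemma Ww_length (n c β f) : (Ww n c β f).length = 2 * n + 3 := by
  rw [Ww, List.length_append, FreeGroup.invRev_length, List.length_cons, vw_length]
  omega

lemma Ww_mk (n c β f) :
    FreeGroup.mk (Ww n c β f) =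
      (FreeGroup.mk (vw n c β f))⁻¹ * FreeGroup.mk [c] *
        ((FreeGroup.mk (vw n c β f))⁻¹)⁻¹ := by
  rw [inv_inv, FreeGroup.inv_mk, FreeGroup.mul_mk, FreeGroup.mul_mk, List.append_assoc]
  rfl

lemma Ww_prim (n c β f) : IsPrimitive (FreeGroup.mk (Ww n c β f)) := by
  rw [Ww_mk]
  exact prim_conj _ (prim_single c)

/-- The family map. -/
def famF (n : ℕ) (p : Ltr × Bool × (Fin n → Fin 3)) : FreeGroup (Fin 2) :=
  FreeGroup.mk (Ww n p.1 p.2.1 p.2.2)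

lemma famF_inj (n : ℕ) : Function.Injective (famF n) := by
  rintro ⟨c, β, f⟩ ⟨c', β', f'⟩ h
  have hW : Ww n c β f = Ww n c' β' f' := by
    have := congrArg FreeGroup.toWord h
    rwa [famF, famF, Ww_toWord, Ww_toWord] at this
  rw [Ww, Ww] at hW
  obtain ⟨h1, h2⟩ := List.append_inj hW
    (by rw [FreeGroup.invRev_length, FreeGroup.invRev_length, vw_length, vw_length])
  injection h2 with hc h3
  subst hc
  obtain ⟨hl, ht⟩ := extw_inj _ _ _ _ h3
  have hβ : β = β' := (Prod.ext_iff.mp hl).2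
  have hf : f = f' := List.ofFn_injective ht
  simp [hβ, hf]

/- ### The extra element -/

def ew (n : ℕ) : List Ltr :=
  List.replicate (n + 1) ((0 : Fin 2), true) ++
    (((1 : Fin 2), true) :: List.replicate (n + 1) ((0 : Fin 2), true))

lemma ew_chain (n : ℕ) : List.Chain' R (ew n) := by
  rw [ew]; show List.IsChain R _; rw [List.isChain_append]
  refine ⟨List.isChain_replicate_of_rel _ (by decide), ?_, ?_⟩
  · rw [List.isChain_cons]
    refine ⟨?_, List.isChain_replicate_of_rel _ (by decide)⟩
    intro y hy
    simp [List.head?_replicate] at hy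
    cases hy
    decide
  · intro x hx y hy
    simp [List.getLast?_replicate] at hx
    cases hx
    cases hy
    decide

lemma ew_toWord (n : ℕ) : (FreeGroup.mk (ew n)).toWord = ew n := by
  rw [FreeGroup.toWord_mk]; exact reduce_eq_self (ew_chain n)

lemma ew_length (n : ℕ) : (ew n).length = 2 * n + 3 := by
  simp [ew]; omega

lemma rep_mk (K : ℕ) :
    FreeGroup.mk (List.replicate K ((0 : Fin 2), true)) = (FreeGroup.of 0) ^ K := by
  rw [← FreeGroup.toWord_of_pow (0 : Fin 2) K, FreeGroup.mk_toWord]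

lemma ew_mk (n : ℕ) :
    FreeGroup.mk (ew n) =
      (FreeGroup.of 0) ^ (n + 1) * FreeGroup.of 1 * (FreeGroup.of 0) ^ (n + 1) := by
  rw [← rep_mk, show FreeGroup.of (1 : Fin 2) = FreeGroup.mk [((1 : Fin 2), true)] from rfl,
    FreeGroup.mul_mk, FreeGroup.mul_mk, List.append_assoc]
  rfl

lemma ew_prim (n : ℕ) : IsPrimitive (FreeGroup.mk (ew n)) := by
  rw [ew_mk]; exact prim_e (n + 1)

lemma ew_ne_fam (n : ℕ) (p : Ltr × Bool × (Fin n → Fin 3)) :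
    famF n p ≠ FreeGroup.mk (ew n) := by
  obtain ⟨c, β, f⟩ := p
  intro h
  have hW : Ww n c β f = ew n := by
    have := congrArg FreeGroup.toWord h
    rwa [famF, Ww_toWord, ew_toWord] at this
  rw [Ww, ew] at hW
  have hlast := congrArg List.getLast? hW
  rw [List.getLast?_append_of_ne_nil _ (by simp), List.getLast?_append_of_ne_nil _ (by simp),
    show (c :: vw n c β f) = [c] ++ vw n c β f from rfl,
    List.getLast?_append_of_ne_nil _ (vw_ne_nil n c β f),
    show ((1 : Fin 2), true) :: List.replicate (n + 1) ((0 : Fin 2), true)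
      = [((1 : Fin 2), true)] ++ List.replicate (n + 1) ((0 : Fin 2), true) from rfl,
    List.getLast?_append_of_ne_nil _ (by simp), List.getLast?_replicate] at hlast
  simp at hlast
  have hhead := congrArg List.head? hW
  rw [head?_append_of_ne_nil (by
      intro hnil
      have := congrArg List.length hnil
      rw [FreeGroup.invRev_length, vw_length] at this
      simp at this),
    head?_append_of_ne_nil (by simp), head?_invRev, hlast, List.head?_replicate] at hhead
  simp at hhead

/- ### Counting -/

lemma S_finite (m : ℕ) :
    {u : FreeGroup (Fin 2) | IsPrimitive u ∧ u.toWord.length = m}.Finite := by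
  have h1 : Set.InjOn FreeGroup.toWord
      (FreeGroup.toWord ⁻¹' {l : List Ltr | l.length = m}) :=
    FreeGroup.toWord_injective.injOn
  exact ((List.finite_length_eq (Fin 2 × Bool) m).preimage h1).subset fun u hu => hu.2

lemma card_le_ncard {I : Type} [Fintype I] {S : Set (FreeGroup (Fin 2))} (hfin : S.Finite)
    (F : I → FreeGroup (Fin 2)) (hinj : Function.Injective F) (hmem : ∀ i, F i ∈ S) :
    Fintype.card I ≤ S.ncard := by
  have h : (Set.range F).ncard = Fintype.card I := by
    rw [← Nat.card_coe_set_eq, Nat.card_range_of_injective hinj, Nat.card_eq_fintype_card]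
  rw [← h]
  exact Set.ncard_le_ncard (Set.range_subset_iff.mpr hmem) hfin

theorem primitive_count_odd (m : ℕ) (hm : Odd m) (h1 : 1 ≤ m) :
    (8 / (3 * Real.sqrt 3)) * (Real.sqrt 3) ^ m <
      (({u : FreeGroup (Fin 2) | IsPrimitive u ∧ u.toWord.length = m}.ncard : ℝ)) := by
  set S := {u : FreeGroup (Fin 2) | IsPrimitive u ∧ u.toWord.length = m} with hS
  have hfin := S_finite m
  have hs0 : (0 : ℝ) < Real.sqrt 3 := Real.sqrt_pos.mpr (by norm_num)
  have hs2 : Real.sqrt 3 ^ 2 = 3 := Real.sq_sqrt (by norm_num)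
  obtain ⟨k, hk⟩ := hm
  rcases k with _ | n
  · -- m = 1
    have hm1 : m = 1 := by omega
    subst hm1
    have h4 : Fintype.card Ltr ≤ S.ncard := by
      refine card_le_ncard hfin (fun c : Ltr => FreeGroup.mk [c]) ?_ ?_
      · intro c c' h
        have := congrArg FreeGroup.toWord h
        rwa [FreeGroup.toWord_mk, FreeGroup.toWord_mk, FreeGroup.reduce_singleton,
          FreeGroup.reduce_singleton, List.cons.injEq, and_iff_left rfl] at this
      · intro c
        refine ⟨prim_single c, ?_⟩
        rw [FreeGroup.toWord_mk, FreeGroup.reduce_singleton]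
        rfl
    have h4' : (4 : ℝ) ≤ (S.ncard : ℝ) := by
      have : (4 : ℕ) ≤ S.ncard := by simpa using h4
      exact_mod_cast this
    have key : 8 / (3 * Real.sqrt 3) * Real.sqrt 3 ^ 1 = 8 / 3 := by
      field_simp
    rw [key]
    linarith
  · -- m = 2n + 3
    have hm3 : m = 2 * n + 3 := by omega
    subst hm3
    have hcard : Fintype.card ((Ltr × Bool × (Fin n → Fin 3)) ⊕ Unit) = 8 * 3 ^ n + 1 := by
      simp [Fintype.card_sum, Fintype.card_prod, Fintype.card_fun]
      ring
    have hle : 8 * 3 ^ n + 1 ≤ S.ncard := by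
      rw [← hcard]
      refine card_le_ncard hfin
        (Sum.elim (famF n) (fun _ => FreeGroup.mk (ew n))) ?_ ?_
      · rintro (p | u) (q | v) h
        · exact congrArg Sum.inl (famF_inj n h)
        · exact absurd h (ew_ne_fam n p)
        · exact absurd h.symm (ew_ne_fam n q)
        · rfl
      · rintro (p | u)
        · exact ⟨Ww_prim n p.1 p.2.1 p.2.2, by
            simp only [Sum.elim_inl, famF, Ww_toWord, Ww_length]⟩
        · exact ⟨ew_prim n, by simp only [Sum.elim_inr, ew_toWord, ew_length]⟩
    have hle' : (8 * 3 ^ n + 1 : ℝ) ≤ (S.ncard : ℝ) := by exact_mod_cast hle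
    have key : 8 / (3 * Real.sqrt 3) * Real.sqrt 3 ^ (2 * n + 3) = 8 * 3 ^ n := by
      have hpow : Real.sqrt 3 ^ (2 * n + 3) = (Real.sqrt 3 ^ 2) ^ (n + 1) * Real.sqrt 3 := by
        ring
      rw [hpow, hs2]
      field_simp
      ring
    rw [key]
    linarith
end
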